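/- Let G be an abelian topological group, C ⊆ G with 0 ∈ C, and n a positive integer. Then ((n)·qc(C))^▷ = ((n)C)^▷, where qc(C) = C^▷◁ is the quasi-convex hull of C. Moreover qc((n)C) + qc((n)C) ⊆ qc((2n)C), and consequently X := ⋃ₙ qc((n)C) is a subgroup of G. -/

import Mathlib

open scoped Pointwise Topology
open Complex Real

set_option linter.unusedSectionVars false

variable (G : Type*) [AddCommGroup G] [TopologicalSpace G] [IsTopologicalAddGroup G]

/-- A (continuous) character of `G` with values in the circle group. -/
def IsChar (χ : G → Circle) : Prop :=
  Continuous χ ∧ ∀ x y : G, χ (x + y) = χ x * χ y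

/-- `S₊ = {z ∈ S : Re z ≥ 0}`. -/
def Splus : Set Circle := {z | 0 ≤ (z : ℂ).re}

/-- The character group `Ĝ`, as a set of functions `G → Circle`. -/
def charSet : Set (G → Circle) := {χ | IsChar G χ}

/-- The inverse polar `B^◁ = {g ∈ G : χ(g) ∈ S₊ ∀ χ ∈ B}` of a set of characters. -/
def invPolar (B : Set (G → Circle)) : Set G := {g | ∀ χ ∈ B, χ g ∈ Splus}

/-- The polar `A^▷ = {χ ∈ Ĝ : χ(A) ⊆ S₊}` of a subset of `G`. -/
def polarG (A : Set G) : Set (G → Circle) := {χ | IsChar G χ ∧ ∀ g ∈ A, χ g ∈ Splus}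

/-- The `n`-fold sumset `(n)K` of a set of characters (written multiplicatively). -/
def mpow (K : Set (G → Circle)) : ℕ → Set (G → Circle)
  | 0 => {1}
  | n + 1 => mpow K n * K

/-- The `n`-fold sumset `(n)A` of a subset of `G`. -/
def addPow (A : Set G) : ℕ → Set G
  | 0 => {0}
  | n + 1 => addPow A n + A

/-- `C₍ₙ₎ = {g ∈ G : g, 2g, …, ng ∈ C}`. -/
def seg (n : ℕ) (C : Set G) : Set G := {g | ∀ k ∈ Finset.Icc 1 n, k • g ∈ C}

/-- The quasi-convex hull `qc(C) = C^▷◁`. -/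
def qcHull (C : Set G) : Set G := invPolar G (polarG G C)

namespace Stmt9Aux

variable {G}

/-! ### Real-angle lemmas -/

lemma abs_le_pi_div_two {x : ℝ} (hx : |x| ≤ π) (hc : 0 ≤ Real.cos x) : |x| ≤ π / 2 := by
  by_contra h
  push_neg at h
  have : Real.cos |x| < 0 :=
    Real.cos_neg_of_pi_div_two_lt_of_lt h (lt_of_le_of_lt hx (by linarith [Real.pi_pos]))
  rw [Real.cos_abs] at this
  linarith

lemma key_cos {θ : ℝ} (hθ : |θ| ≤ π) :
    ∀ n : ℕ, 1 ≤ n → (∀ k ∈ Finset.Icc 1 n, 0 ≤ Real.cos (k * θ)) → |θ| ≤ π / (2 * n) := by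
  intro n
  induction n with
  | zero => omega
  | succ m ih =>
    intro _ h
    rcases Nat.eq_zero_or_pos m with hm | hm
    · subst hm
      have h1 : 0 ≤ Real.cos θ := by simpa using h 1 (by simp)
      have h2 := abs_le_pi_div_two hθ h1
      push_cast
      linarith [h2]
    · have hIH : |θ| ≤ π / (2 * m) := by
        refine ih hm fun k hk => h k ?_
        simp only [Finset.mem_Icc] at hk ⊢
        omega
      have hmpos : (0 : ℝ) < (m : ℝ) := by exact_mod_cast hm
      have hcast : ((m : ℝ) + 1) ≤ 2 * (m : ℝ) := by
        have : (1 : ℝ) ≤ (m : ℝ) := by exact_mod_cast hm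
        linarith
      have hb : |((m : ℝ) + 1) * θ| ≤ π := by
        rw [abs_mul, _root_.abs_of_nonneg (by positivity : (0:ℝ) ≤ (m:ℝ) + 1)]
        calc ((m : ℝ) + 1) * |θ| ≤ ((m:ℝ)+1) * (π / (2*(m:ℝ))) :=
              mul_le_mul_of_nonneg_left hIH (by positivity)
          _ ≤ (2*(m:ℝ)) * (π / (2*(m:ℝ))) :=
              mul_le_mul_of_nonneg_right hcast (by positivity)
          _ = π := by field_simp
      have hc : 0 ≤ Real.cos (((m : ℝ) + 1) * θ) := by
        have := h (m+1) (by simp)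
        push_cast at this
        exact this
      have h2 := abs_le_pi_div_two hb hc
      rw [abs_mul, _root_.abs_of_nonneg (by positivity : (0:ℝ) ≤ (m:ℝ) + 1)] at h2
      have hpos : (0:ℝ) < (m:ℝ) + 1 := by positivity
      rw [le_div_iff₀ (by positivity)]
      push_cast
      calc |θ| * (2 * ((m:ℝ)+1)) = (((m:ℝ)+1) * |θ|) * 2 := by ring
        _ ≤ (π/2) * 2 := by gcongr
        _ = π := by ring

/-! ### Circle lemmas -/

lemma circle_exp_mem_Splus {θ : ℝ} (h : |θ| ≤ π / 2) : Circle.exp θ ∈ Splus := by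
  show (0 : ℝ) ≤ ((Circle.exp θ : Circle) : ℂ).re
  rw [Circle.coe_exp, Complex.exp_ofReal_mul_I_re]
  rw [abs_le] at h
  exact Real.cos_nonneg_of_mem_Icc ⟨h.1, h.2⟩

lemma exp_rep {z : Circle} {n : ℕ} (hn : 1 ≤ n)
    (h : ∀ k ∈ Finset.Icc 1 n, z ^ k ∈ Splus) :
    ∃ θ : ℝ, |θ| ≤ π / (2 * n) ∧ z = Circle.exp θ := by
  set θ := Complex.arg (z : ℂ) with hθdef
  have habs : ‖(z : ℂ)‖ = 1 := Circle.norm_coe z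
  have hz : (z : ℂ) = Complex.exp (θ * Complex.I) := by
    conv_lhs => rw [← Complex.norm_mul_exp_arg_mul_I (z : ℂ)]
    rw [habs, Complex.ofReal_one, one_mul]
  have hcoe : ∀ k : ℕ, ((z ^ k : Circle) : ℂ) = (z : ℂ) ^ k := by
    intro k
    induction k with
    | zero => simp
    | succ m ih => rw [pow_succ, Circle.coe_mul, ih, pow_succ]
  have hcos : ∀ k ∈ Finset.Icc 1 n, 0 ≤ Real.cos (k * θ) := by
    intro k hk
    have hmem : (0 : ℝ) ≤ ((z ^ k : Circle) : ℂ).re := h k hk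
    rw [hcoe k, hz, ← Complex.exp_nat_mul] at hmem
    have : ((k : ℂ) * (↑θ * Complex.I)) = (↑((k : ℝ) * θ) * Complex.I) := by
      push_cast
      ring
    rw [this, Complex.exp_ofReal_mul_I_re] at hmem
    exact hmem
  refine ⟨θ, key_cos (Complex.abs_arg_le_pi _) n hn hcos, ?_⟩
  ext
  rw [Circle.coe_exp, hz]

lemma Splus_inv {z : Circle} (h : z ∈ Splus) : z⁻¹ ∈ Splus := by
  show (0 : ℝ) ≤ ((z⁻¹ : Circle) : ℂ).re
  rw [Circle.coe_inv_eq_conj, Complex.conj_re]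
  exact h

/-! ### Character lemmas -/

variable {χ : G → Circle}

lemma char_map_zero (h : IsChar G χ) : χ 0 = 1 := by
  have h0 := h.2 0 0
  rw [add_zero] at h0
  exact (left_eq_mul.mp h0)

lemma char_nsmul (h : IsChar G χ) (k : ℕ) (g : G) : χ (k • g) = χ g ^ k := by
  induction k with
  | zero => simpa using char_map_zero h
  | succ m ih => rw [succ_nsmul, h.2, ih, pow_succ]

lemma char_neg (h : IsChar G χ) (g : G) : χ (-g) = (χ g)⁻¹ := by
  have : χ g * χ (-g) = 1 := by
    rw [← h.2, add_neg_cancel, char_map_zero h]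
  exact eq_inv_of_mul_eq_one_right (by rw [mul_comm] at this ⊢; exact this)

lemma isChar_pow (h : IsChar G χ) (k : ℕ) : IsChar G (χ ^ k) := by
  constructor
  · have : (χ ^ k) = fun x => χ x ^ k := by
      funext x; simp [Pi.pow_apply]
    rw [this]
    exact h.1.pow k
  · intro x y
    simp only [Pi.pow_apply, h.2, mul_pow]

/-! ### addPow lemmas -/

lemma zero_mem_addPow {A : Set G} (h : (0 : G) ∈ A) : ∀ n, (0 : G) ∈ addPow G A n
  | 0 => rfl
  | n + 1 => by
    have := Set.add_mem_add (zero_mem_addPow h n) h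
    simpa [addPow] using this

lemma addPow_mono {A B : Set G} (h : A ⊆ B) : ∀ n, addPow G A n ⊆ addPow G B n
  | 0 => le_refl _
  | n + 1 => Set.add_subset_add (addPow_mono h n) h

lemma addPow_le {A : Set G} (h0 : (0 : G) ∈ A) {m n : ℕ} (h : m ≤ n) :
    addPow G A m ⊆ addPow G A n := by
  induction n with
  | zero =>
    have : m = 0 := Nat.le_zero.mp h
    subst this; exact le_refl _
  | succ k ih =>
    rcases Nat.lt_or_ge m (k+1) with hm | hm
    · intro x hx
      have hx' : x ∈ addPow G A k := ih (Nat.lt_succ_iff.mp hm) hx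
      have := Set.add_mem_add hx' h0
      simpa [addPow] using this
    · have : m = k + 1 := le_antisymm h hm
      subst this; exact le_refl _

lemma addPow_add {A : Set G} : ∀ m n : ℕ,
    addPow G A m + addPow G A n ⊆ addPow G A (m + n)
  | m, 0 => by
    rintro x ⟨a, ha, b, hb, rfl⟩
    have hb0 : b = 0 := hb
    subst hb0
    simpa using ha
  | m, n + 1 => by
    rintro x ⟨a, ha, b, hb, rfl⟩
    rcases hb with ⟨c, hc, d, hd, rfl⟩
    have : (a + c) + d ∈ addPow G A (m + n) + A :=
      Set.add_mem_add (addPow_add m n (Set.add_mem_add ha hc)) hd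
    show a + (c + d) ∈ addPow G A (m + (n + 1))
    rw [← add_assoc a c d]
    exact this

lemma nsmul_mem_addPow {A : Set G} (h0 : (0 : G) ∈ A) {g : G} {k n : ℕ}
    (hg : g ∈ A) (hk : k ≤ n) : k • g ∈ addPow G A n := by
  have : k • g ∈ addPow G A k := by
    clear hk
    induction k with
    | zero => simpa using zero_mem_addPow h0 0
    | succ m ih =>
      rw [succ_nsmul]
      exact Set.add_mem_add ih hg
  exact addPow_le h0 hk this

/-! ### polar lemmas -/

lemma polar_anti {A B : Set G} (h : A ⊆ B) : polarG G B ⊆ polarG G A :=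
  fun _ hχ => ⟨hχ.1, fun g hg => hχ.2 g (h hg)⟩

lemma subset_qcHull (A : Set G) : A ⊆ qcHull G A :=
  fun _ hg _ hχ => hχ.2 _ hg

lemma qcHull_mono {A B : Set G} (h : A ⊆ B) : qcHull G A ⊆ qcHull G B :=
  fun _ hg χ hχ => hg χ (polar_anti h hχ)

/-! ### Main analytic lemma for sums -/

lemma char_addPow_rep (hχ : IsChar G χ) {A : Set G} {b : ℝ}
    (h : ∀ g ∈ A, ∃ θ : ℝ, |θ| ≤ b ∧ χ g = Circle.exp θ) :
    ∀ m : ℕ, ∀ x ∈ addPow G A m, ∃ θ : ℝ, |θ| ≤ m * b ∧ χ x = Circle.exp θ := by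
  intro m
  induction m with
  | zero =>
    intro x hx
    have hx0 : x = 0 := hx
    subst hx0
    exact ⟨0, by simp, by rw [char_map_zero hχ, Circle.exp_zero]⟩
  | succ k ih =>
    rintro x ⟨a, ha, g, hg, rfl⟩
    obtain ⟨θ₁, hθ₁, he₁⟩ := ih a ha
    obtain ⟨θ₂, hθ₂, he₂⟩ := h g hg
    refine ⟨θ₁ + θ₂, ?_, ?_⟩
    · have hb : 0 ≤ b := le_trans (abs_nonneg _) hθ₂
      calc |θ₁ + θ₂| ≤ |θ₁| + |θ₂| := abs_add_le _ _
        _ ≤ k * b + b := add_le_add hθ₁ hθ₂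
        _ = (k + 1 : ℕ) * b := by push_cast; ring
    · rw [hχ.2, he₁, he₂, Circle.exp_add]

end Stmt9Aux

open Stmt9Aux in
theorem stmt9 (C : Set G) (hC0 : (0 : G) ∈ C) :
    (∀ n : ℕ, 0 < n →
        polarG G (addPow G (qcHull G C) n) = polarG G (addPow G C n)) ∧
      (∀ n : ℕ, 0 < n →
        qcHull G (addPow G C n) + qcHull G (addPow G C n) ⊆ qcHull G (addPow G C (2 * n))) ∧
      ∃ H : AddSubgroup G,
        (H : Set G) = ⋃ (n : ℕ) (_ : 0 < n), qcHull G (addPow G C n) := by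
  -- Part 1
  have part1 : ∀ n : ℕ, 0 < n →
      polarG G (addPow G (qcHull G C) n) = polarG G (addPow G C n) := by
    intro n hn
    apply le_antisymm
    · exact polar_anti (addPow_mono (subset_qcHull C) n)
    · rintro χ ⟨hχ, hp⟩
      refine ⟨hχ, ?_⟩
      have hnR : (0 : ℝ) < (n : ℝ) := by exact_mod_cast hn
      have hrep : ∀ g ∈ qcHull G C, ∃ θ : ℝ, |θ| ≤ π / (2 * n) ∧ χ g = Circle.exp θ := by
        intro g hg
        refine exp_rep hn ?_
        intro k hk
        rw [Finset.mem_Icc] at hk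
        have hχk : (χ ^ k) ∈ polarG G C := by
          refine ⟨isChar_pow hχ k, fun a ha => ?_⟩
          show (χ a) ^ k ∈ Splus
          rw [← char_nsmul hχ]
          exact hp _ (nsmul_mem_addPow hC0 ha hk.2)
        have := hg _ hχk
        simpa using this
      intro x hx
      obtain ⟨θ, hθ, he⟩ := char_addPow_rep hχ hrep n x hx
      have hθ' : |θ| ≤ π / 2 := by
        have : (n : ℝ) * (π / (2 * n)) = π / 2 := by field_simp
        rw [this] at hθ
        exact hθ
      rw [he]
      exact circle_exp_mem_Splus hθ'
  -- Part 2
  have part2 : ∀ n : ℕ, 0 < n →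
      qcHull G (addPow G C n) + qcHull G (addPow G C n) ⊆ qcHull G (addPow G C (2 * n)) := by
    intro n hn
    rintro x ⟨g, hg, h, hh, rfl⟩
    intro χ hχmem
    obtain ⟨hχ, hp⟩ := hχmem
    have hle : addPow G C n ⊆ addPow G C (2 * n) := addPow_le hC0 (by omega)
    have hχ1 : χ ∈ polarG G (addPow G C n) := ⟨hχ, fun a ha => hp a (hle ha)⟩
    have hχ2 : (χ ^ 2) ∈ polarG G (addPow G C n) := by
      refine ⟨isChar_pow hχ 2, fun a ha => ?_⟩
      show (χ a) ^ 2 ∈ Splus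
      rw [pow_two, ← hχ.2]
      have : a + a ∈ addPow G C (2 * n) := by
        have := addPow_add (A := C) n n (Set.add_mem_add ha ha)
        rwa [two_mul]
      exact hp _ this
    have hrep : ∀ y ∈ qcHull G (addPow G C n), ∃ θ : ℝ, |θ| ≤ π / 4 ∧ χ y = Circle.exp θ := by
      intro y hy
      have := exp_rep (z := χ y) (n := 2) (by norm_num) ?_
      · obtain ⟨θ, hθ, he⟩ := this
        refine ⟨θ, ?_, he⟩
        have h24 : π / (2 * ((2 : ℕ) : ℝ)) = π / 4 := by norm_num
        rwa [h24] at hθ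
      · intro k hk
        rw [Finset.mem_Icc] at hk
        obtain ⟨hk1, hk2⟩ := hk
        interval_cases k
        · simpa using hy χ hχ1
        · have := hy _ hχ2
          simpa using this
    obtain ⟨θ₁, hθ₁, he₁⟩ := hrep g hg
    obtain ⟨θ₂, hθ₂, he₂⟩ := hrep h hh
    rw [hχ.2, he₁, he₂, ← Circle.exp_add]
    apply circle_exp_mem_Splus
    calc |θ₁ + θ₂| ≤ |θ₁| + |θ₂| := abs_add_le _ _
      _ ≤ π / 4 + π / 4 := add_le_add hθ₁ hθ₂
      _ = π / 2 := by ring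
  refine ⟨part1, part2, ?_⟩
  -- Part 3
  refine ⟨⟨⟨⟨⋃ (n : ℕ) (_ : 0 < n), qcHull G (addPow G C n), ?_⟩, ?_⟩, ?_⟩, rfl⟩
  · -- add_mem
    rintro a b ha hb
    simp only [Set.mem_iUnion] at ha hb ⊢
    obtain ⟨n, hn, ha⟩ := ha
    obtain ⟨m, hm, hb⟩ := hb
    set N := max n m with hN
    have haN : a ∈ qcHull G (addPow G C N) :=
      qcHull_mono (addPow_le hC0 (le_max_left n m)) ha
    have hbN : b ∈ qcHull G (addPow G C N) :=
      qcHull_mono (addPow_le hC0 (le_max_right n m)) hb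
    refine ⟨2 * N, by omega, ?_⟩
    exact part2 N (by omega) (Set.add_mem_add haN hbN)
  · -- zero_mem
    simp only [Set.mem_iUnion]
    exact ⟨1, one_pos, subset_qcHull _ (zero_mem_addPow hC0 1)⟩
  · -- neg_mem
    rintro a ha
    simp only [Set.mem_iUnion] at ha ⊢
    obtain ⟨n, hn, ha⟩ := ha
    refine ⟨n, hn, ?_⟩
    intro χ hχ
    have := ha χ hχ
    rw [char_neg hχ.1]
    exact Splus_inv this
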